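/- Let m ≥ 1, let Θ be an m×m real matrix with I − Θ invertible, let 𝒯̊ ∈ ℝ^m have strictly positive entries, let 𝒱̊ ∈ ℝ^m, and let w ∈ ℝ^m have nonnegative entries summing to 1; assume 𝒯 := wᵀ(I−Θ)^{−1}𝒯̊ ≠ 0, and set 𝒱 := wᵀ(I−Θ)^{−1}𝒱̊. Let L ∈ ℝ, let u, d ∈ ℝ with d < 0 < u, and for p ∈ (0,1) set x(p) := log(−(p·u)/((1−p)·d)). Then there exists exactly one pair (p*, Δ*) ∈ (0,1) × ℝ^m satisfying both the consistency condition (I−Θ)Δ* = x(p*)·𝒯̊ + 𝒱̊ and the market-clearing condition ⟨w, Δ*⟩ = (u−d)·L; it satisfies p* = (−d)/( u·exp( (𝒱 − (u−d)·L)/𝒯 ) − d ) and Δ* = (I−Θ)^{−1}( x(p*)·𝒯̊ + 𝒱̊ ). -/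

import Mathlib

open Matrix

/-- per-node multi-population market-clearing mean-field equilibrium.  With
`I − Θ` invertible and aggregate risk tolerance `𝒯 = wᵀ(I−Θ)⁻¹𝒯̊ ≠ 0`, there is exactly one
pair `(p*, Δ*) ∈ (0,1) × ℝ^m` satisfying the consistency condition
`(I−Θ)Δ* = x(p*)·𝒯̊ + 𝒱̊` and the market clearing `⟨w, Δ*⟩ = (u−d)·L`, with the stated
explicit formulas. -/
theorem stmt_8 (m : ℕ) (hm : 1 ≤ m) (Θ : Matrix (Fin m) (Fin m) ℝ)
    (hΘ : IsUnit (1 - Θ))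
    (Tcirc : Fin m → ℝ) (hT : ∀ p, 0 < Tcirc p) (Vcirc : Fin m → ℝ)
    (w : Fin m → ℝ) (hw : ∀ p, 0 ≤ w p) (hw1 : ∑ p, w p = 1)
    (hTagg : w ⬝ᵥ ((1 - Θ)⁻¹ *ᵥ Tcirc) ≠ 0)
    (L u d : ℝ) (hd : d < 0) (hu : 0 < u) :
    let x : ℝ → ℝ := fun p => Real.log (-(p * u) / ((1 - p) * d))
    let Tagg : ℝ := w ⬝ᵥ ((1 - Θ)⁻¹ *ᵥ Tcirc)
    let Vagg : ℝ := w ⬝ᵥ ((1 - Θ)⁻¹ *ᵥ Vcirc)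
    let pstar : ℝ := (-d) / (u * Real.exp ((Vagg - (u - d) * L) / Tagg) - d)
    let Δstar : Fin m → ℝ := (1 - Θ)⁻¹ *ᵥ (x pstar • Tcirc + Vcirc)
    pstar ∈ Set.Ioo (0 : ℝ) 1 ∧
    (1 - Θ) *ᵥ Δstar = x pstar • Tcirc + Vcirc ∧
    w ⬝ᵥ Δstar = (u - d) * L ∧
    ∀ (p : ℝ) (Δ : Fin m → ℝ), p ∈ Set.Ioo (0 : ℝ) 1 →
      (1 - Θ) *ᵥ Δ = x p • Tcirc + Vcirc → w ⬝ᵥ Δ = (u - d) * L →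
      p = pstar ∧ Δ = Δstar := by
  intro x Tagg Vagg pstar Δstar
  have hdet : IsUnit (1 - Θ).det := (Matrix.isUnit_iff_isUnit_det _).1 hΘ
  have hinv : (1 - Θ) * (1 - Θ)⁻¹ = 1 := Matrix.mul_nonsing_inv _ hdet
  have hinv' : (1 - Θ)⁻¹ * (1 - Θ) = 1 := Matrix.nonsing_inv_mul _ hdet
  set E := Real.exp ((Vagg - (u - d) * L) / Tagg) with hE
  have hEpos : 0 < E := Real.exp_pos _
  have hD : 0 < u * E - d := by nlinarith
  have hp0 : 0 < pstar := div_pos (by linarith) hD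
  have hp1 : pstar < 1 := by
    rw [show pstar = (-d) / (u * E - d) from rfl, div_lt_one hD]; nlinarith
  -- key value of x at pstar
  have hxp : x pstar = ((u - d) * L - Vagg) / Tagg := by
    have harg : -(pstar * u) / ((1 - pstar) * d) = 1 / E := by
      have hps : pstar = (-d) / (u * E - d) := rfl
      have hd0 : d ≠ 0 := ne_of_lt hd
      have hu0 : u ≠ 0 := ne_of_gt hu
      have hE0 : E ≠ 0 := ne_of_gt hEpos
      have hD0 : u * E - d ≠ 0 := ne_of_gt hD
      rw [hps]
      field_simp
      ring
    show Real.log (-(pstar * u) / ((1 - pstar) * d)) = _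
    rw [harg, one_div, Real.log_inv, hE, Real.log_exp]
    ring
  -- consistency for Δstar
  have hcons : (1 - Θ) *ᵥ Δstar = x pstar • Tcirc + Vcirc := by
    show (1 - Θ) *ᵥ ((1 - Θ)⁻¹ *ᵥ _) = _
    rw [Matrix.mulVec_mulVec, hinv, Matrix.one_mulVec]
  -- market clearing for Δstar
  have hdot : ∀ a : ℝ, w ⬝ᵥ ((1 - Θ)⁻¹ *ᵥ (a • Tcirc + Vcirc))
      = a * Tagg + Vagg := by
    intro a
    rw [Matrix.mulVec_add, Matrix.mulVec_smul, dotProduct_add, dotProduct_smul]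
    rfl
  have hmcstar : w ⬝ᵥ Δstar = (u - d) * L := by
    show w ⬝ᵥ ((1 - Θ)⁻¹ *ᵥ (x pstar • Tcirc + Vcirc)) = _
    rw [hdot, hxp]
    field_simp
    have hT0 : Tagg ≠ 0 := hTagg
    rw [mul_div_cancel_right₀ _ hT0]; ring
  refine ⟨⟨hp0, hp1⟩, hcons, hmcstar, ?_⟩
  intro p Δ hp hc hmc
  have hΔ : Δ = (1 - Θ)⁻¹ *ᵥ (x p • Tcirc + Vcirc) := by
    rw [← hc, Matrix.mulVec_mulVec, hinv', Matrix.one_mulVec]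
  have hxpx : x p = x pstar := by
    have h1 : x p * Tagg + Vagg = (u - d) * L := by
      rw [← hdot (x p), ← hΔ]; exact hmc
    have : x p = ((u - d) * L - Vagg) / Tagg := by
      field_simp
      rw [eq_div_iff (show Tagg ≠ 0 from hTagg)]
      linarith
    rw [this, hxp]
  obtain ⟨hp0', hp1'⟩ := hp
  have hargpos : ∀ q : ℝ, 0 < q → q < 1 → 0 < -(q * u) / ((1 - q) * d) := by
    intro q h0 h1
    apply div_pos_of_neg_of_neg
    · nlinarith
    · nlinarith
  have hexp : -(p * u) / ((1 - p) * d) = -(pstar * u) / ((1 - pstar) * d) := by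
    have e1 := Real.exp_log (hargpos p hp0' hp1')
    have e2 := Real.exp_log (hargpos pstar hp0 hp1)
    rw [← e1, ← e2]
    exact congrArg Real.exp hxpx
  have hppstar : p = pstar := by
    have h1p : (1 - p) ≠ 0 := by linarith
    have h1ps : (1 - pstar) ≠ 0 := by linarith
    have hd0 : d ≠ 0 := ne_of_lt hd
    field_simp at hexp
    have h : u * d * (p - pstar) = 0 := by linear_combination (-(u * d)) * hexp
    have hud : u * d ≠ 0 := mul_ne_zero (ne_of_gt hu) hd0
    have := (mul_eq_zero.mp h).resolve_left hud
    linarith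
  refine ⟨hppstar, ?_⟩
  rw [hΔ, hppstar]
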